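/- Let 1 ≤ r < 2 and let 2 < s < r′, where r′ = r/(r−1) is the conjugate exponent of r. There is a constant C = C(r,s) such that for every compactly supported m : ℝ → ℂ with ‖m‖_{V^r} ≤ 1, every Schwartz function f : ℝ → ℂ, and every x ∈ ℝ: |(m·f̂)ˇ(x)| ≤ C · sup_𝓘 (Σ_{I ∈ 𝓘} |(1_I·f̂)ˇ(x)|^s)^{1/s}, where the supremum is over all collections 𝓘 of pairwise disjoint subintervals of ℝ. -/

import Mathlib

open MeasureTheory Real Set Filter
open scoped ENNReal NNReal FourierTransform

/-- The `r`-variation norm `‖m‖_{V^r} = ‖m‖_{L^∞} +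
sup_{N, ξ₀ < ⋯ < ξ_N} (∑_{i=1}^N |m(ξ_i) − m(ξ_{i−1})|^r)^{1/r}`,
the supremum being over all strictly increasing finite sequences of reals. -/
noncomputable def variationNorm (r : ℝ) (m : ℝ → ℂ) : ℝ≥0∞ :=
  (⨆ ξ : ℝ, (‖m ξ‖₊ : ℝ≥0∞)) +
    ⨆ (N : ℕ) (ξ : Fin (N + 1) → ℝ) (_ : StrictMono ξ),
      (∑ i : Fin N, (‖m (ξ i.succ) - m (ξ i.castSucc)‖₊ : ℝ≥0∞) ^ r) ^ (1 / r)

/-- Application of the Fourier multiplier `m` to `f`, i.e. `(m·f̂)ˇ`. -/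
noncomputable def applyMultiplier (m f : ℝ → ℂ) : ℝ → ℂ :=
  𝓕⁻ (fun ξ => m ξ * 𝓕 f ξ)

/-- The Rubio de Francia type maximal `s`-square function
`sup_𝓘 (∑_{I ∈ 𝓘} |(1_I·f̂)ˇ(x)|^s)^{1/s}`, the supremum being over all collections
`𝓘` of pairwise disjoint subintervals of `ℝ`. -/
noncomputable def maximalSquareFunction (s : ℝ) (f : ℝ → ℂ) (x : ℝ) : ℝ≥0∞ :=
  ⨆ (𝓘 : Finset (Set ℝ)) (_ : ∀ I ∈ 𝓘, I.OrdConnected)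
      (_ : ((𝓘 : Set (Set ℝ))).PairwiseDisjoint id),
    (∑ I ∈ 𝓘, (‖applyMultiplier (I.indicator 1) f x‖₊ : ℝ≥0∞) ^ s) ^ (1 / s)

namespace RdFAux


/-- Hölder + pigeonhole: some index has small product. -/
lemma min_select {ι : Type*} (T : Finset ι) (hT : T.Nonempty) (x y : ι → ℝ)
    (hx0 : ∀ k, 0 ≤ x k) (hy0 : ∀ k, 0 ≤ y k)
    {ρ s V W : ℝ} (hρ : 1 < ρ) (hs : 1 < s) (hθ : 1 < 1/ρ + 1/s)
    (hV : 0 ≤ V) (hW : 0 ≤ W)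
    (hx : ∑ k ∈ T, x k ^ ρ ≤ V ^ ρ) (hy : ∑ k ∈ T, y k ^ s ≤ W ^ s) :
    ∃ k ∈ T, x k * y k ≤ V * W / (T.card : ℝ) ^ (1/ρ + 1/s) := by
  set θ := 1/ρ + 1/s with hθdef
  have hθ0 : 0 < θ := lt_trans one_pos hθ
  have hρ0 : 0 < ρ := lt_trans one_pos hρ
  have hs0 : 0 < s := lt_trans one_pos hs
  obtain ⟨k₀, hk₀T, hmin⟩ := T.exists_min_image (fun k => x k * y k) hT
  refine ⟨k₀, hk₀T, ?_⟩
  set μ := x k₀ * y k₀ with hμdef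
  have hμ0 : 0 ≤ μ := mul_nonneg (hx0 _) (hy0 _)
  have hcard : 0 < (T.card : ℝ) := by exact_mod_cast Finset.card_pos.mpr hT
  -- Hölder with exponents (θρ, θs)
  have hconj : (θ*ρ).HolderConjugate (θ*s) := by
    rw [Real.holderConjugate_iff]
    constructor
    · nlinarith
    · rw [mul_inv, mul_inv]
      have : ρ⁻¹ + s⁻¹ = θ := by rw [hθdef]; rw [one_div, one_div]
      field_simp
      rw [hθdef]; field_simp
  have step1 : (T.card : ℝ) * μ ^ (1/θ) ≤ ∑ k ∈ T, (x k * y k) ^ (1/θ) := by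
    have := Finset.card_nsmul_le_sum T (fun k => (x k * y k) ^ (1/θ)) (μ ^ (1/θ))
      (fun k hk => Real.rpow_le_rpow hμ0 (hmin k hk) (by positivity))
    simpa [nsmul_eq_mul] using this
  have step2 : ∑ k ∈ T, (x k * y k) ^ (1/θ) ≤ (V*W) ^ (1/θ) := by
    have h1 : ∑ k ∈ T, (x k * y k) ^ (1/θ) = ∑ k ∈ T, (x k ^ (1/θ)) * (y k ^ (1/θ)) := by
      refine Finset.sum_congr rfl fun k _ => ?_
      rw [Real.mul_rpow (hx0 k) (hy0 k)]
    have h2 := Real.inner_le_Lp_mul_Lq_of_nonneg T hconj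
      (f := fun k => x k ^ (1/θ)) (g := fun k => y k ^ (1/θ))
      (fun k _ => Real.rpow_nonneg (hx0 k) _) (fun k _ => Real.rpow_nonneg (hy0 k) _)
    have e1 : ∀ k, (x k ^ (1/θ)) ^ (θ*ρ) = x k ^ ρ := fun k => by
      rw [← Real.rpow_mul (hx0 k)]
      congr 1; field_simp
    have e2 : ∀ k, (y k ^ (1/θ)) ^ (θ*s) = y k ^ s := fun k => by
      rw [← Real.rpow_mul (hy0 k)]
      congr 1; field_simp
    simp only [e1, e2] at h2
    have h3 : (∑ k ∈ T, x k ^ ρ) ^ (1/(θ*ρ)) ≤ (V^ρ) ^ (1/(θ*ρ)) :=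
      Real.rpow_le_rpow (Finset.sum_nonneg fun k _ => Real.rpow_nonneg (hx0 k) _) hx
        (by positivity)
    have h4 : (∑ k ∈ T, y k ^ s) ^ (1/(θ*s)) ≤ (W^s) ^ (1/(θ*s)) :=
      Real.rpow_le_rpow (Finset.sum_nonneg fun k _ => Real.rpow_nonneg (hy0 k) _) hy
        (by positivity)
    have e3 : (V^ρ) ^ (1/(θ*ρ)) = V ^ (1/θ) := by
      rw [← Real.rpow_mul hV]; congr 1; field_simp
    have e4 : (W^s) ^ (1/(θ*s)) = W ^ (1/θ) := by
      rw [← Real.rpow_mul hW]; congr 1; field_simp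
    calc ∑ k ∈ T, (x k * y k) ^ (1/θ) = ∑ k ∈ T, (x k ^ (1/θ)) * (y k ^ (1/θ)) := h1
      _ ≤ (∑ k ∈ T, x k ^ ρ) ^ (1/(θ*ρ)) * (∑ k ∈ T, y k ^ s) ^ (1/(θ*s)) := h2
      _ ≤ (V^ρ) ^ (1/(θ*ρ)) * (W^s) ^ (1/(θ*s)) := by
          apply mul_le_mul h3 h4 (Real.rpow_nonneg (Finset.sum_nonneg
            fun k _ => Real.rpow_nonneg (hy0 k) _) _) (Real.rpow_nonneg (by positivity) _)
      _ = V ^ (1/θ) * W ^ (1/θ) := by rw [e3, e4]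
      _ = (V*W) ^ (1/θ) := (Real.mul_rpow hV hW).symm
  have step3 : μ ^ (1/θ) ≤ (V*W) ^ (1/θ) / (T.card : ℝ) := by
    rw [le_div_iff₀ hcard]
    calc μ ^ (1/θ) * (T.card:ℝ) = (T.card:ℝ) * μ ^ (1/θ) := mul_comm _ _
      _ ≤ ∑ k ∈ T, (x k * y k) ^ (1/θ) := step1
      _ ≤ (V*W) ^ (1/θ) := step2
  have hA : (μ ^ (1/θ)) ^ θ = μ := by
    rw [← Real.rpow_mul hμ0, one_div, inv_mul_cancel₀ hθ0.ne', Real.rpow_one]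
  have hB : ((V*W) ^ (1/θ)) ^ θ = V*W := by
    rw [← Real.rpow_mul (mul_nonneg hV hW), one_div, inv_mul_cancel₀ hθ0.ne', Real.rpow_one]
  have h5 := Real.rpow_le_rpow (Real.rpow_nonneg hμ0 _) step3 hθ0.le
  rw [hA, Real.div_rpow (Real.rpow_nonneg (mul_nonneg hV hW) _) hcard.le, hB] at h5
  exact h5



/-- cumulative zeta-type sums -/
noncomputable def cZ (θ : ℝ) : ℕ → ℝ := fun n => ∑ j ∈ Finset.range (n-1), (1/((j:ℝ)+1)^θ)

lemma cZ_zero (θ : ℝ) : cZ θ 0 = 0 := by simp [cZ]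
lemma cZ_one (θ : ℝ) : cZ θ 1 = 0 := by simp [cZ]
lemma cZ_succ_succ (θ : ℝ) (n : ℕ) : cZ θ (n+2) = cZ θ (n+1) + 1/((n:ℝ)+1)^θ := by
  simp [cZ, Finset.sum_range_succ]

/-- **Discrete Young inequality** (Löve–Young), induction form. -/
lemma young_aux {ρ s θ : ℝ} (hρ : 1 < ρ) (hs : 1 < s) (hθdef : θ = 1/ρ + 1/s) (hθ : 1 < θ)
    (m F : ℝ → ℂ) (W : ℝ) (hW : 0 ≤ W)
    (Hm : ∀ (N : ℕ) (η : ℕ → ℝ), StrictMono η →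
      ∑ i ∈ Finset.range N, ‖m (η (i+1)) - m (η i)‖ ^ ρ ≤ 1)
    (HF : ∀ (N : ℕ) (η : ℕ → ℝ), StrictMono η →
      ∑ i ∈ Finset.range N, ‖F (η (i+1)) - F (η i)‖ ^ s ≤ W ^ s) :
    ∀ (n : ℕ) (ξ : ℕ → ℝ), StrictMono ξ →
      ‖(∑ k ∈ Finset.range n, m (ξ k) * (F (ξ (k+1)) - F (ξ k)))
        - m (ξ 0) * (F (ξ n) - F (ξ 0))‖ ≤ W * cZ θ n := by
  intro n
  induction n with
  | zero => intro ξ hξ; simp [cZ_zero]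
  | succ n ih =>
    match n, ih with
    | 0, _ => intro ξ hξ; simp [cZ_one, Finset.sum_range_one]
    | (j+1), ih =>
      intro ξ hξ
      -- interior points are ξ (k+1) for k ∈ range (j+1)
      set x : ℕ → ℝ := fun k => ‖m (ξ (k+1)) - m (ξ k)‖ with hxdef
      set y : ℕ → ℝ := fun k => ‖F (ξ (k+2)) - F (ξ (k+1))‖ with hydef
      have hx : ∑ k ∈ Finset.range (j+1), x k ^ ρ ≤ (1:ℝ) ^ ρ := by
        rw [Real.one_rpow]; exact Hm (j+1) ξ hξ
      have hy : ∑ k ∈ Finset.range (j+1), y k ^ s ≤ W ^ s := by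
        exact HF (j+1) (fun i => ξ (i+1)) (fun a b hab => hξ (by omega))
      obtain ⟨k, hkmem, hkey⟩ := min_select (Finset.range (j+1)) ⟨0, by simp⟩ x y
        (fun k => norm_nonneg _) (fun k => norm_nonneg _) hρ hs (hθdef ▸ hθ)
        zero_le_one hW hx hy
      have hkj : k ≤ j := by have := Finset.mem_range.mp hkmem; omega
      -- the sequence with ξ (k+1) removed
      set ξ' : ℕ → ℝ := fun i => if i < k+1 then ξ i else ξ (i+1) with hξ'def
      have hξ' : StrictMono ξ' := by
        apply strictMono_nat_of_lt_succ
        intro i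
        simp only [hξ'def]
        split_ifs <;> exact hξ (by omega)
      have hξ'0 : ξ' 0 = ξ 0 := by simp [hξ'def]
      have hξ'top : ξ' (j+1) = ξ (j+2) := by
        simp only [hξ'def]; rw [if_neg (by omega)]
      -- sum identity
      set t : ℕ → ℂ := fun i => m (ξ i) * (F (ξ (i+1)) - F (ξ i)) with htdef
      set t' : ℕ → ℂ := fun i => m (ξ' i) * (F (ξ' (i+1)) - F (ξ' i)) with ht'def
      have e1 : ∀ i ∈ Finset.range k, t' i = t i := by
        intro i hi
        have hik : i < k := Finset.mem_range.mp hi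
        simp only [ht'def, htdef, hξ'def]
        rw [if_pos (by omega), if_pos (by omega)]
      have e2 : t' k = m (ξ k) * (F (ξ (k+2)) - F (ξ k)) := by
        simp only [ht'def, hξ'def]
        rw [if_pos (by omega), if_neg (by omega)]
      have e3 : ∀ i ∈ Finset.Ico (k+1) (j+1), t' i = t (i+1) := by
        intro i hi
        obtain ⟨h1, h2⟩ := Finset.mem_Ico.mp hi
        simp only [ht'def, htdef, hξ'def]
        rw [if_neg (by omega), if_neg (by omega)]
      have hsum' : ∑ i ∈ Finset.range (j+1), t' i
          = (∑ i ∈ Finset.range k, t i) + t' k + ∑ i ∈ Finset.Ico (k+2) (j+2), t i := by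
        have d1 : ∑ i ∈ Finset.range (j+1), t' i
            = ∑ i ∈ Finset.Ico 0 k, t' i + ∑ i ∈ Finset.Ico k (j+1), t' i := by
          rw [Finset.sum_Ico_consecutive _ (Nat.zero_le k) (by omega), ← Finset.range_eq_Ico]
        have d2 : ∑ i ∈ Finset.Ico k (j+1), t' i = t' k + ∑ i ∈ Finset.Ico (k+1) (j+1), t' i :=
          Finset.sum_eq_sum_Ico_succ_bot (by omega) _
        have d3 : ∑ i ∈ Finset.Ico (k+1) (j+1), t' i = ∑ i ∈ Finset.Ico (k+2) (j+2), t i := by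
          rw [Finset.sum_congr rfl e3]
          rw [Finset.sum_Ico_eq_sum_range, Finset.sum_Ico_eq_sum_range]
          apply Finset.sum_congr (by congr 1; omega)
          intro i _; congr 1; omega
        rw [d1, d2, d3, ← Finset.range_eq_Ico, Finset.sum_congr rfl e1]; ring
      have hsum : ∑ i ∈ Finset.range (j+2), t i
          = (∑ i ∈ Finset.range k, t i) + t k + t (k+1) + ∑ i ∈ Finset.Ico (k+2) (j+2), t i := by
        have d1 : ∑ i ∈ Finset.range (j+2), t i
            = ∑ i ∈ Finset.Ico 0 k, t i + ∑ i ∈ Finset.Ico k (j+2), t i := by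
          rw [Finset.sum_Ico_consecutive _ (Nat.zero_le k) (by omega), ← Finset.range_eq_Ico]
        have d2 : ∑ i ∈ Finset.Ico k (j+2), t i = t k + ∑ i ∈ Finset.Ico (k+1) (j+2), t i :=
          Finset.sum_eq_sum_Ico_succ_bot (by omega) _
        have d3 : ∑ i ∈ Finset.Ico (k+1) (j+2), t i
            = t (k+1) + ∑ i ∈ Finset.Ico (k+2) (j+2), t i :=
          Finset.sum_eq_sum_Ico_succ_bot (by omega) _
        rw [d1, d2, d3, ← Finset.range_eq_Ico]; ring
      have identity : ∑ i ∈ Finset.range (j+2), t i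
          = (∑ i ∈ Finset.range (j+1), t' i)
            + (m (ξ (k+1)) - m (ξ k)) * (F (ξ (k+2)) - F (ξ (k+1))) := by
        rw [hsum, hsum', e2]
        simp only [htdef]
        ring
      -- conclude
      have ihξ' := ih ξ' hξ'
      rw [hξ'0, hξ'top] at ihξ'
      have hxy : ‖(m (ξ (k+1)) - m (ξ k)) * (F (ξ (k+2)) - F (ξ (k+1)))‖ = x k * y k := by
        rw [norm_mul]
      have hcard : ((Finset.range (j+1)).card : ℝ) = ((j:ℝ)+1) := by simp
      have hbound : x k * y k ≤ W * (1/((j:ℝ)+1)^θ) := by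
        rw [hcard] at hkey
        calc x k * y k ≤ 1 * W / ((j:ℝ)+1) ^ (1/ρ + 1/s) := hkey
          _ = W * (1/((j:ℝ)+1)^θ) := by rw [← hθdef]; ring
      calc ‖(∑ i ∈ Finset.range (j+2), t i) - m (ξ 0) * (F (ξ (j+2)) - F (ξ 0))‖
          = ‖((∑ i ∈ Finset.range (j+1), t' i) - m (ξ 0) * (F (ξ (j+2)) - F (ξ 0)))
              + (m (ξ (k+1)) - m (ξ k)) * (F (ξ (k+2)) - F (ξ (k+1)))‖ := by
            rw [identity]; congr 1; ring
        _ ≤ ‖(∑ i ∈ Finset.range (j+1), t' i) - m (ξ 0) * (F (ξ (j+2)) - F (ξ 0))‖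
              + ‖(m (ξ (k+1)) - m (ξ k)) * (F (ξ (k+2)) - F (ξ (k+1)))‖ := norm_add_le _ _
        _ ≤ W * cZ θ (j+1) + x k * y k := by
            rw [hxy]; exact add_le_add ihξ' le_rfl
        _ ≤ W * cZ θ (j+1) + W * (1/((j:ℝ)+1)^θ) := add_le_add le_rfl hbound
        _ = W * cZ θ (j+2) := by rw [cZ_succ_succ]; ring

/-- Sum of interval oscillations (ρ-power form) is controlled by the ρ-variation. -/
lemma osc_sum {m : ℝ → ℂ} {ρ : ℝ} (hρ : 0 < ρ) (hm1 : ∀ ξ, ‖m ξ‖ ≤ 1)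
    (Hm : ∀ (N : ℕ) (η : ℕ → ℝ), StrictMono η →
      ∑ i ∈ Finset.range N, ‖m (η (i+1)) - m (η i)‖ ^ ρ ≤ 1)
    (t : ℕ → ℝ) (ht : StrictMono t) (n : ℕ) :
    ∑ k ∈ Finset.range n, sSup ((fun v => ‖m v - m (t k)‖ ^ ρ) '' Ico (t k) (t (k+1))) ≤ 1 := by
  set osc : ℕ → ℝ := fun k => sSup ((fun v => ‖m v - m (t k)‖ ^ ρ) '' Ico (t k) (t (k+1)))
    with hoscdef
  apply le_of_forall_pos_le_add
  intro ε hε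
  set ε' : ℝ := ε / (n+1) with hε'def
  have hε' : 0 < ε' := by positivity
  have hsel : ∀ k : ℕ, ∃ v, t k < v ∧ v < t (k+1) ∧ osc k - ε' ≤ ‖m v - m (t k)‖ ^ ρ := by
    intro k
    have hne : ((fun v => ‖m v - m (t k)‖ ^ ρ) '' Ico (t k) (t (k+1))).Nonempty :=
      ⟨_, Set.mem_image_of_mem _ (Set.mem_Ico.mpr ⟨le_refl _, ht (by omega)⟩)⟩
    obtain ⟨w, hwmem, hwval⟩ := exists_lt_of_lt_csSup hne
      (show osc k - ε' < osc k by linarith)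
    obtain ⟨v, hvmem, rfl⟩ := hwmem
    obtain ⟨hv1, hv2⟩ := Set.mem_Ico.mp hvmem
    rcases eq_or_lt_of_le hv1 with heq | hlt
    · -- degenerate: chosen point is the left endpoint, value is 0
      refine ⟨(t k + t (k+1))/2, by linarith [ht (show k < k+1 by omega)],
        by linarith [ht (show k < k+1 by omega)], ?_⟩
      have : ‖m v - m (t k)‖ ^ ρ = 0 := by
        rw [← heq, sub_self, norm_zero, Real.zero_rpow hρ.ne']
      have h0 : osc k - ε' < 0 := by
        have := hwval
        simp only [‹‖m v - m (t k)‖ ^ ρ = 0›] at this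
        linarith
      exact le_trans h0.le (Real.rpow_nonneg (norm_nonneg _) _)
    · exact ⟨v, hlt, hv2, hwval.le⟩
  choose v hv1 hv2 hv3 using hsel
  set η : ℕ → ℝ := fun j => if j % 2 = 0 then t (j/2) else v (j/2) with hηdef
  have hη : StrictMono η := by
    apply strictMono_nat_of_lt_succ
    intro j
    rcases Nat.even_or_odd j with ⟨a, ha⟩ | ⟨a, ha⟩
    · have h1 : j % 2 = 0 := by omega
      have h2 : (j+1) % 2 = 1 := by omega
      have h3 : j / 2 = a := by omega
      have h4 : (j+1) / 2 = a := by omega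
      simp only [hηdef, h1, h2, h3, h4]
      norm_num
      exact hv1 a
    · have h1 : j % 2 = 1 := by omega
      have h2 : (j+1) % 2 = 0 := by omega
      have h3 : j / 2 = a := by omega
      have h4 : (j+1) / 2 = a + 1 := by omega
      simp only [hηdef, h1, h2, h3, h4]
      norm_num
      exact hv2 a
  have hmain := Hm (2*n) η hη
  set u : ℕ → ℝ := fun i => ‖m (η (i+1)) - m (η i)‖ ^ ρ with hudef
  have heval : ∀ k, u (2*k) = ‖m (v k) - m (t k)‖ ^ ρ := by
    intro k
    have h1 : (2*k) % 2 = 0 := by omega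
    have h2 : (2*k+1) % 2 = 1 := by omega
    have h3 : (2*k) / 2 = k := by omega
    have h4 : (2*k+1) / 2 = k := by omega
    simp only [hudef, hηdef, h1, h2, h3, h4]
    norm_num
  have hdouble : ∑ k ∈ Finset.range n, u (2*k) ≤ ∑ i ∈ Finset.range (2*n), u i := by
    have hinj : Set.InjOn (fun k => 2*k) (Finset.range n) := by
      intro a _ b _ h; simp only [] at h; omega
    rw [← Finset.sum_image hinj]
    apply Finset.sum_le_sum_of_subset_of_nonneg
    · intro i hi
      simp only [Finset.mem_image, Finset.mem_range] at hi ⊢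
      obtain ⟨a, ha, rfl⟩ := hi; omega
    · intro i _ _; exact Real.rpow_nonneg (norm_nonneg _) _
  have hlow : ∑ k ∈ Finset.range n, (osc k - ε') ≤ ∑ k ∈ Finset.range n, u (2*k) := by
    apply Finset.sum_le_sum
    intro k _
    rw [heval k]; exact hv3 k
  have : ∑ k ∈ Finset.range n, (osc k - ε') = (∑ k ∈ Finset.range n, osc k) - n * ε' := by
    rw [Finset.sum_sub_distrib]; simp [mul_comm]
  have hfin : (∑ k ∈ Finset.range n, osc k) - n * ε' ≤ 1 := by
    rw [← this]; exact le_trans hlow (le_trans hdouble hmain)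
  have hnn : (n:ℝ) * ε' ≤ ε := by
    have hn1 : (0:ℝ) < (n:ℝ)+1 := by positivity
    have : (n:ℝ) * (ε/((n:ℝ)+1)) = ε * ((n:ℝ)/((n:ℝ)+1)) := by ring
    rw [hε'def, this]
    calc ε * ((n:ℝ)/((n:ℝ)+1)) ≤ ε * 1 := by
          apply mul_le_mul_of_nonneg_left _ hε.le
          rw [div_le_one hn1]; linarith
      _ = ε := mul_one ε
  linarith

lemma char_continuous (x : ℝ) : Continuous (fun v : ℝ => (Real.fourierChar (v * x) : ℂ)) := by
  apply continuous_subtype_val.comp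
  exact Real.continuous_fourierChar.comp (continuous_id.mul continuous_const)

lemma char_norm (y : ℝ) : ‖(Real.fourierChar y : ℂ)‖ = 1 := by
  rw [Circle.norm_coe]

lemma integrable_char_mul {q : ℝ → ℂ} (x : ℝ) (hq : Integrable q) :
    Integrable (fun v => (Real.fourierChar (v * x) : ℂ) * q v) :=
  hq.bdd_mul (char_continuous x).aestronglyMeasurable (c := 1) (Filter.Eventually.of_forall fun v => (char_norm _).le)

lemma applyMultiplier_eq (m f : ℝ → ℂ) (x : ℝ) :
    applyMultiplier m f x = ∫ v, (Real.fourierChar (v * x) : ℂ) * (m v * 𝓕 f v) := by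
  unfold applyMultiplier
  rw [Real.fourierInv_eq_fourier_neg, Real.fourier_real_eq]
  congr 1; funext v
  rw [Circle.smul_def, mul_neg, neg_neg, smul_eq_mul]

lemma applyMultiplier_undef {m f : ℝ → ℂ} (x : ℝ)
    (h : ¬ Integrable (fun ξ => m ξ * 𝓕 f ξ)) : applyMultiplier m f x = 0 := by
  rw [applyMultiplier_eq]
  apply integral_undef
  intro hInt
  apply h
  have hc : Continuous (fun v : ℝ => (Real.fourierChar (-(v * x)) : ℂ)) := by
    have := char_continuous (-x); simpa [mul_neg] using this
  have hmeas : AEStronglyMeasurable (fun ξ => m ξ * 𝓕 f ξ) volume := by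
    have h2 : (fun v => (Real.fourierChar (-(v * x)) : ℂ) *
        ((Real.fourierChar (v * x) : ℂ) * (m v * 𝓕 f v)))
        = fun v => m v * 𝓕 f v := by
      funext v
      rw [← mul_assoc, ← Circle.coe_mul, ← AddChar.map_add_eq_mul, neg_add_cancel,
        AddChar.map_zero_eq_one, Circle.coe_one, one_mul]
    rw [← h2]
    exact hc.aestronglyMeasurable.mul hInt.aestronglyMeasurable
  have hnorm : Integrable (fun ξ => ‖m ξ * 𝓕 f ξ‖) volume :=
    hInt.norm.congr (by filter_upwards with v; rw [norm_mul, char_norm, one_mul])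
  exact (integrable_norm_iff hmeas).mp hnorm

lemma setIntegral_Iio_diff {q : ℝ → ℂ} (hq : Integrable q) {a b : ℝ} (hab : a ≤ b) :
    (∫ v in Iio b, q v) - (∫ v in Iio a, q v) = ∫ v in Ico a b, q v := by
  have hdisj : Disjoint (Iio a) (Ico a b) := by
    rw [Set.disjoint_left]
    intro v hv hv2
    exact absurd hv2.1 (not_le.mpr hv)
  rw [← Set.Iio_union_Ico_eq_Iio hab,
    setIntegral_union hdisj measurableSet_Ico hq.integrableOn hq.integrableOn]
  ring

lemma applyMultiplier_indicator (I : Set ℝ) (hI : MeasurableSet I) (f : ℝ → ℂ) (x : ℝ) :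
    applyMultiplier (I.indicator 1) f x = ∫ v in I, (Real.fourierChar (v * x) : ℂ) * 𝓕 f v := by
  rw [applyMultiplier_eq, ← integral_indicator hI]
  congr 1; funext v
  by_cases hv : v ∈ I
  · rw [Set.indicator_of_mem hv, Set.indicator_of_mem hv, Pi.one_apply, one_mul]
  · rw [Set.indicator_of_notMem hv, Set.indicator_of_notMem hv, zero_mul, mul_zero]

lemma sum_rpow_le_one {ι : Type*} (T : Finset ι) (a : ι → ℝ) (h0 : ∀ i, 0 ≤ a i)
    {r ρ : ℝ} (hr : 0 < r) (hrρ : r ≤ ρ) (h : ∑ i ∈ T, a i ^ r ≤ 1) :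
    ∑ i ∈ T, a i ^ ρ ≤ 1 := by
  refine le_trans (Finset.sum_le_sum ?_) h
  intro i hi
  rcases eq_or_lt_of_le (h0 i) with heq | hpos
  · rw [← heq, Real.zero_rpow (by linarith), Real.zero_rpow hr.ne']
  · apply Real.rpow_le_rpow_of_exponent_ge hpos _ hrρ
    by_contra hgt
    push_neg at hgt
    have h1 : (1:ℝ) < a i ^ r := Real.one_lt_rpow_iff_of_pos hpos |>.mpr (Or.inl ⟨hgt, hr⟩)
    have h2 : a i ^ r ≤ 1 :=
      le_trans (Finset.single_le_sum (fun j _ => Real.rpow_nonneg (h0 j) r) hi) h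
    linarith

lemma var_bound_sup {r : ℝ} {m : ℝ → ℂ} (h : variationNorm r m ≤ 1) : ∀ ξ, ‖m ξ‖ ≤ 1 := by
  intro ξ
  have h1 : (‖m ξ‖₊ : ℝ≥0∞) ≤ 1 :=
    le_trans (le_trans (le_iSup (fun ξ => (‖m ξ‖₊ : ℝ≥0∞)) ξ) le_self_add) h
  have h2 : ‖m ξ‖₊ ≤ 1 := by exact_mod_cast h1
  exact_mod_cast h2

lemma var_bound_sum {r : ℝ} {m : ℝ → ℂ} (hr : 0 < r) (h : variationNorm r m ≤ 1) :
    ∀ (n : ℕ) (η : ℕ → ℝ), StrictMono η →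
      ∑ i ∈ Finset.range n, ‖m (η (i+1)) - m (η i)‖ ^ r ≤ 1 := by
  intro n η hη
  set ξF : Fin (n+1) → ℝ := η ∘ Fin.val with hξFdef
  have hξF : StrictMono ξF := hη.comp Fin.val_strictMono
  have h1 : (∑ i : Fin n, (‖m (ξF i.succ) - m (ξF i.castSucc)‖₊ : ℝ≥0∞) ^ r) ^ (1/r) ≤ 1 := by
    refine le_trans (le_trans ?_ le_add_self) h
    exact le_iSup_of_le n (le_iSup_of_le ξF (le_iSup_of_le hξF le_rfl))
  have h2 : (∑ i : Fin n, (‖m (ξF i.succ) - m (ξF i.castSucc)‖₊ : ℝ≥0∞) ^ r) ≤ 1 := by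
    have h3 := ENNReal.rpow_le_rpow h1 hr.le
    rwa [← ENNReal.rpow_mul, one_div, inv_mul_cancel₀ hr.ne', ENNReal.rpow_one,
      ENNReal.one_rpow] at h3
  have h4 : (∑ i : Fin n, ((‖m (ξF i.succ) - m (ξF i.castSucc)‖₊ ^ r : ℝ≥0) : ℝ≥0∞)) ≤ 1 := by
    refine le_trans (le_of_eq (Finset.sum_congr rfl fun i _ => ?_)) h2
    exact ENNReal.coe_rpow_of_nonneg _ hr.le
  have h5 : (∑ i : Fin n, ‖m (ξF i.succ) - m (ξF i.castSucc)‖₊ ^ r : ℝ≥0) ≤ 1 := by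
    exact_mod_cast h4
  have h6 : ∑ i : Fin n, ‖m (ξF i.succ) - m (ξF i.castSucc)‖ ^ r ≤ 1 := by
    have h' : ((∑ i : Fin n, ‖m (ξF i.succ) - m (ξF i.castSucc)‖₊ ^ r : ℝ≥0) : ℝ) ≤ 1 := by
      exact_mod_cast h5
    rw [NNReal.coe_sum] at h'
    refine le_trans (le_of_eq (Finset.sum_congr rfl fun i _ => ?_)) h'
    rw [NNReal.coe_rpow, coe_nnnorm]
  rw [← Fin.sum_univ_eq_sum_range (fun i => ‖m (η (i+1)) - m (η i)‖ ^ r) n]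
  refine le_trans (le_of_eq (Finset.sum_congr rfl fun i _ => ?_)) h6
  simp [hξFdef, Fin.val_succ, Fin.coe_castSucc]

lemma msf_ge (s : ℝ) (f : ℝ → ℂ) (x : ℝ) (n : ℕ) (η : ℕ → ℝ) (hη : StrictMono η) :
    (∑ i ∈ Finset.range n,
        (‖applyMultiplier ((Ico (η i) (η (i+1))).indicator 1) f x‖₊ : ℝ≥0∞) ^ s) ^ (1/s)
      ≤ maximalSquareFunction s f x := by
  classical
  set 𝓘 : Finset (Set ℝ) := (Finset.range n).image (fun i => Ico (η i) (η (i+1))) with h𝓘def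
  have hmemIco : ∀ i : ℕ, η i ∈ Ico (η i) (η (i+1)) :=
    fun i => ⟨le_refl _, hη (Nat.lt_succ_self i)⟩
  have hinj : ∀ a ∈ Finset.range n, ∀ b ∈ Finset.range n,
      Ico (η a) (η (a+1)) = Ico (η b) (η (b+1)) → a = b := by
    intro a _ b _ hab
    have h1 : η a ∈ Ico (η b) (η (b+1)) := hab ▸ hmemIco a
    have h2 : η b ∈ Ico (η a) (η (a+1)) := hab ▸ hmemIco b
    exact hη.injective (le_antisymm h2.1 h1.1)
  have hord : ∀ I ∈ 𝓘, I.OrdConnected := by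
    intro I hI
    simp only [h𝓘def, Finset.mem_image] at hI
    obtain ⟨i, _, rfl⟩ := hI
    exact Set.ordConnected_Ico
  have hdisj : ((𝓘 : Set (Set ℝ))).PairwiseDisjoint id := by
    intro I hI J hJ hIJ
    simp only [h𝓘def, Finset.coe_image, Set.mem_image, Finset.mem_coe,
      Finset.mem_range] at hI hJ
    obtain ⟨a, _, rfl⟩ := hI
    obtain ⟨b, _, rfl⟩ := hJ
    have hab : a ≠ b := fun hh => hIJ (by rw [hh])
    have key : ∀ c d : ℕ, c < d →
        Disjoint (Ico (η c) (η (c+1))) (Ico (η d) (η (d+1))) := by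
      intro c d hcd
      rw [Set.Ico_disjoint_Ico]
      exact le_trans inf_le_left (le_trans (hη.monotone (by omega)) le_sup_right)
    rcases lt_or_gt_of_ne hab with hh | hh
    · exact key a b hh
    · exact (key b a hh).symm
  have hsum : ∑ I ∈ 𝓘, (‖applyMultiplier (I.indicator 1) f x‖₊ : ℝ≥0∞) ^ s
      = ∑ i ∈ Finset.range n,
          (‖applyMultiplier ((Ico (η i) (η (i+1))).indicator 1) f x‖₊ : ℝ≥0∞) ^ s :=
    Finset.sum_image hinj
  rw [← hsum]
  unfold maximalSquareFunction
  exact le_iSup_of_le 𝓘 (le_iSup_of_le hord (le_iSup_of_le hdisj le_rfl))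

lemma msf_real {s : ℝ} (hs : 0 < s) (f : ℝ → ℂ) (x : ℝ)
    (hfin : maximalSquareFunction s f x ≠ ⊤) (n : ℕ) (η : ℕ → ℝ) (hη : StrictMono η) :
    ∑ i ∈ Finset.range n, ‖applyMultiplier ((Ico (η i) (η (i+1))).indicator 1) f x‖ ^ s
      ≤ (maximalSquareFunction s f x).toReal ^ s := by
  have h1 := msf_ge s f x n η hη
  set E : ℝ≥0∞ := ∑ i ∈ Finset.range n,
    (‖applyMultiplier ((Ico (η i) (η (i+1))).indicator 1) f x‖₊ : ℝ≥0∞) ^ s with hEdef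
  have h2 : E ≤ (maximalSquareFunction s f x) ^ s := by
    have h3 := ENNReal.rpow_le_rpow h1 hs.le
    rwa [← ENNReal.rpow_mul, one_div, inv_mul_cancel₀ hs.ne', ENNReal.rpow_one] at h3
  have hEcoe : E = ((∑ i ∈ Finset.range n,
      ‖applyMultiplier ((Ico (η i) (η (i+1))).indicator 1) f x‖₊ ^ s : ℝ≥0) : ℝ≥0∞) := by
    rw [ENNReal.coe_finset_sum]
    exact Finset.sum_congr rfl fun i _ => (ENNReal.coe_rpow_of_nonneg _ hs.le).symm
  have h4 := ENNReal.toReal_mono (ENNReal.rpow_ne_top_of_nonneg hs.le hfin) h2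
  rw [hEcoe, ENNReal.coe_toReal, ← ENNReal.toReal_rpow] at h4
  refine le_trans (le_of_eq ?_) h4
  push_cast
  rfl

end RdFAux

open RdFAux

/-- **Pointwise domination of a `V^r`-multiplier by the `s`-square function.**
Let `1 ≤ r < 2` and `2 < s < r′` (where `r′` is the Hölder conjugate of `r`;
the condition `s < r′` is stated in the equivalent form `r < s/(s−1) = s′`,
which is also correct when `r = 1`, i.e. `r′ = ∞`). There is a constant
`C = C(r,s)` such that for every compactly supported `m : ℝ → ℂ` with
`‖m‖_{V^r} ≤ 1`, every Schwartz `f : ℝ → ℂ`, and every `x ∈ ℝ`: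
`|(m·f̂)ˇ(x)| ≤ C ⬝ sup_𝓘 (∑_{I ∈ 𝓘} |(1_I·f̂)ˇ(x)|^s)^{1/s}`. -/
theorem multiplier_pointwise_bound (r s : ℝ) (hr1 : 1 ≤ r) (hr2 : r < 2)
    (hs : 2 < s) (hsr : r < s / (s - 1)) :
    ∃ C : ℝ≥0, 0 < C ∧ ∀ m : ℝ → ℂ, HasCompactSupport m → variationNorm r m ≤ 1 →
      ∀ f : SchwartzMap ℝ ℂ, ∀ x : ℝ,
        (‖applyMultiplier m (f : ℝ → ℂ) x‖₊ : ℝ≥0∞) ≤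
          C * maximalSquareFunction s (f : ℝ → ℂ) x := by
  classical
  have hs1 : 1 < s := by linarith
  have hs0 : 0 < s := by linarith
  have hs'1 : 1 < s/(s-1) := by rw [lt_div_iff₀ (by linarith)]; linarith
  have hs'2 : s/(s-1) < 2 := by rw [div_lt_iff₀ (by linarith)]; linarith
  set ρ : ℝ := max r ((1 + s/(s-1))/2) with hρdef
  have hρ1 : 1 < ρ := lt_of_lt_of_le (by linarith) (le_max_right _ _)
  have hρs' : ρ < s/(s-1) := max_lt hsr (by linarith)
  have hρ2 : ρ < 2 := lt_trans hρs' hs'2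
  have hrρ : r ≤ ρ := le_max_left _ _
  have hρ0 : 0 < ρ := by linarith
  set θ : ℝ := 1/ρ + 1/s with hθdef
  have hkey : ρ * (s-1) < s := by
    have := (lt_div_iff₀ (show (0:ℝ) < s-1 by linarith)).mp hρs'
    linarith
  have hθ1 : 1 < θ := by
    have e : 1/ρ + 1/s - 1 = (s - ρ*(s-1))/(ρ*s) := by field_simp; ring
    have : 0 < 1/ρ + 1/s - 1 := by rw [e]; exact div_pos (by linarith) (by positivity)
    rw [hθdef]; linarith
  set K0 : ℝ := ∑' j : ℕ, 1/((j:ℝ)+1)^θ with hK0def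
  have hsummable : Summable (fun j : ℕ => 1/((j:ℝ)+1)^θ) := by
    have h := Real.summable_one_div_nat_rpow.mpr hθ1
    refine Summable.congr ((summable_nat_add_iff 1).mpr h) ?_
    intro j; push_cast; rfl
  have hK0sum : ∀ n : ℕ, cZ θ n ≤ K0 := by
    intro n
    exact Summable.sum_le_tsum _ (fun i _ => by positivity) hsummable
  have hK0nonneg : 0 ≤ K0 := tsum_nonneg (fun j => by positivity)
  refine ⟨Real.toNNReal K0 + 1, by positivity, ?_⟩
  intro m hmc hmv f x
  have hm1 : ∀ ξ, ‖m ξ‖ ≤ 1 := var_bound_sup hmv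
  have hmVr := var_bound_sum (show (0:ℝ) < r by linarith) hmv
  have hmVρ : ∀ (N : ℕ) (η : ℕ → ℝ), StrictMono η →
      ∑ i ∈ Finset.range N, ‖m (η (i+1)) - m (η i)‖ ^ ρ ≤ 1 :=
    fun N η hη => sum_rpow_le_one _ _ (fun i => norm_nonneg _) (by linarith) hrρ (hmVr N η hη)
  by_cases hInt : Integrable (fun ξ => m ξ * 𝓕 (⇑f) ξ)
  swap
  · rw [applyMultiplier_undef x hInt]
    simp
  by_cases hMSF : maximalSquareFunction s (⇑f) x = ⊤
  · rw [hMSF, ENNReal.mul_top (by exact_mod_cast (by positivity : (0:ℝ≥0) < Real.toNNReal K0 + 1).ne')]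
    exact le_top
  set W : ℝ := (maximalSquareFunction s (⇑f) x).toReal with hWdef
  have hW0 : 0 ≤ W := ENNReal.toReal_nonneg
  set g : ℝ → ℂ := fun v => (Real.fourierChar (v * x) : ℂ) * 𝓕 (⇑f) v with hgdef
  have hfhat : Integrable (𝓕 (⇑f)) := by
    have := (SchwartzMap.fourierTransformCLM ℂ f).integrable (μ := volume)
    rwa [SchwartzMap.fourierTransformCLM_apply] at this
  have hgInt : Integrable g := integrable_char_mul x hfhat
  set hfun : ℝ → ℂ := fun v => (Real.fourierChar (v * x) : ℂ) * (m v * 𝓕 (⇑f) v) with hhdef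
  have hhInt : Integrable hfun := integrable_char_mul x hInt
  have hfg : ∀ v, hfun v = m v * g v := fun v => by simp only [hhdef, hgdef]; ring
  set F : ℝ → ℂ := fun u => ∫ v in Iio u, g v with hFdef
  have hFdiff : ∀ a b : ℝ, a ≤ b →
      F b - F a = applyMultiplier ((Ico a b).indicator 1) (⇑f) x := by
    intro a b hab
    rw [applyMultiplier_indicator _ measurableSet_Ico]
    exact setIntegral_Iio_diff hgInt hab
  have hHF : ∀ (N : ℕ) (η : ℕ → ℝ), StrictMono η →
      ∑ i ∈ Finset.range N, ‖F (η (i+1)) - F (η i)‖ ^ s ≤ W ^ s := by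
    intro N η hη
    have h1 := msf_real hs0 (⇑f) x hMSF N η hη
    refine le_trans (le_of_eq (Finset.sum_congr rfl fun i _ => ?_)) h1
    rw [hFdiff (η i) (η (i+1)) (le_of_lt (hη (Nat.lt_succ_self i)))]
  obtain ⟨R, hR⟩ := hmc.isBounded.subset_closedBall 0
  set R' : ℝ := max R 0 + 1 with hR'def
  have hR'pos : 0 < R' := by positivity
  have hm0 : ∀ ξ : ℝ, R' ≤ |ξ| → m ξ = 0 := by
    intro ξ hξ
    apply image_eq_zero_of_notMem_tsupport
    intro hmem
    have h1 := hR hmem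
    rw [Metric.mem_closedBall, Real.dist_eq, sub_zero] at h1
    have h2 : R ≤ max R 0 := le_max_left _ _
    linarith
  set M : ℝ := ∫ v, ‖(⇑f) v‖ with hMdef
  have hM : ∀ w, ‖𝓕 (⇑f) w‖ ≤ M := fun w =>
    VectorFourier.norm_fourierIntegral_le_integral_norm _ _ _ _ _
  have hM0 : 0 ≤ M := le_trans (norm_nonneg _) (hM 0)
  have key : ‖applyMultiplier m (⇑f) x‖ ≤ K0 * W := by
    apply le_of_forall_pos_le_add
    intro ε hε
    obtain ⟨n0, hn0⟩ := exists_nat_gt ((2*R'*M/ε)^2)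
    set n : ℕ := n0 + 1 with hndef
    have hn1 : 1 ≤ n := by omega
    have hn1R : (1:ℝ) ≤ n := by exact_mod_cast hn1
    have hnpos : (0:ℝ) < n := by linarith
    have hnR : (2*R'*M/ε)^2 ≤ (n:ℝ) := by
      have : (n0:ℝ) ≤ n := by exact_mod_cast Nat.le_succ n0
      linarith
    set δ : ℝ := 2*R'/n with hδdef
    have hδpos : 0 < δ := by positivity
    set t : ℕ → ℝ := fun k => -R' + k * δ with htdef
    have ht : StrictMono t := by
      apply strictMono_nat_of_lt_succ
      intro k
      simp only [htdef]
      push_cast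
      nlinarith [hδpos]
    have ht0 : t 0 = -R' := by simp [htdef]
    have htn : t n = R' := by
      simp only [htdef, hδdef]
      field_simp
      ring
    have htd : ∀ k : ℕ, t (k+1) - t k = δ := by
      intro k; simp only [htdef]; push_cast; ring
    set H : ℝ → ℂ := fun u => ∫ v in Iio u, hfun v with hHdef
    have hHdiff : ∀ a b : ℝ, a ≤ b → H b - H a = ∫ v in Ico a b, hfun v :=
      fun a b hab => setIntegral_Iio_diff hhInt hab
    have hAM : applyMultiplier m (⇑f) x = ∫ v in Ico (t 0) (t n), hfun v := by
      rw [applyMultiplier_eq, ← integral_indicator measurableSet_Ico]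
      congr 1; funext v
      by_cases hv : v ∈ Ico (t 0) (t n)
      · rw [Set.indicator_of_mem hv]
      · rw [Set.indicator_of_notMem hv]
        have hmv0 : m v = 0 := by
          apply hm0
          rw [ht0, htn] at hv
          simp only [Set.mem_Ico, not_and, not_lt] at hv
          rcases le_or_gt (-R') v with h1 | h1
          · exact le_abs.mpr (Or.inl (hv h1))
          · exact le_abs.mpr (Or.inr (by linarith))
        simp [hmv0]
    have hpart : ∫ v in Ico (t 0) (t n), hfun v
        = ∑ k ∈ Finset.range n, (H (t (k+1)) - H (t k)) := by
      rw [Finset.sum_range_sub (fun k => H (t k)) n]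
      exact (hHdiff (t 0) (t n) (ht.monotone (Nat.zero_le n))).symm
    set S : ℂ := ∑ k ∈ Finset.range n, m (t k) * (F (t (k+1)) - F (t k)) with hSdef
    have hYoung : ‖S‖ ≤ W * K0 := by
      have h1 := young_aux hρ1 hs1 hθdef hθ1 m F W hW0 hmVρ hHF n t ht
      rw [ht0, hm0 (-R') (by rw [abs_neg, abs_of_pos hR'pos])] at h1
      simp only [zero_mul, sub_zero] at h1
      exact le_trans h1 (mul_le_mul_of_nonneg_left (hK0sum n) hW0)
    set osc : ℕ → ℝ := fun k =>
      sSup ((fun v => ‖m v - m (t k)‖ ^ ρ) '' Ico (t k) (t (k+1))) with hoscdef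
    have hoscbdd : ∀ k : ℕ, BddAbove ((fun v => ‖m v - m (t k)‖ ^ ρ) '' Ico (t k) (t (k+1))) := by
      intro k
      refine ⟨(2:ℝ)^ρ, ?_⟩
      rintro y ⟨v, hv, rfl⟩
      apply Real.rpow_le_rpow (norm_nonneg _) ?_ hρ0.le
      calc ‖m v - m (t k)‖ ≤ ‖m v‖ + ‖m (t k)‖ := norm_sub_le _ _
        _ ≤ 2 := by have := hm1 v; have := hm1 (t k); linarith
    have hosc0 : ∀ k : ℕ, 0 ≤ osc k := by
      intro k
      have hmem : t k ∈ Ico (t k) (t (k+1)) := ⟨le_refl _, ht (Nat.lt_succ_self k)⟩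
      have := le_csSup (hoscbdd k) (Set.mem_image_of_mem _ hmem)
      rw [sub_self, norm_zero, Real.zero_rpow hρ0.ne'] at this
      exact this
    have hoscsum : ∑ k ∈ Finset.range n, osc k ≤ 1 := osc_sum hρ0 hm1 hmVρ t ht n
    have hterm : ∀ k ∈ Finset.range n,
        ‖(H (t (k+1)) - H (t k)) - m (t k) * (F (t (k+1)) - F (t k))‖
          ≤ osc k ^ (1/ρ) * M * δ := by
      intro k _
      have hab : t k ≤ t (k+1) := (ht (Nat.lt_succ_self k)).le
      rw [hHdiff _ _ hab]
      have hFd : F (t (k+1)) - F (t k) = ∫ v in Ico (t k) (t (k+1)), g v :=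
        setIntegral_Iio_diff hgInt hab
      rw [hFd, ← MeasureTheory.integral_const_mul,
        ← integral_sub hhInt.integrableOn ((hgInt.integrableOn).const_mul _)]
      have hb : ∀ v ∈ Ico (t k) (t (k+1)), ‖hfun v - m (t k) * g v‖ ≤ osc k ^ (1/ρ) * M := by
        intro v hv
        rw [hfg v, ← sub_mul, norm_mul]
        apply mul_le_mul ?_ ?_ (norm_nonneg _) (Real.rpow_nonneg (hosc0 k) _)
        · have h1 : ‖m v - m (t k)‖ ^ ρ ≤ osc k := le_csSup (hoscbdd k) ⟨v, hv, rfl⟩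
          have h2 := Real.rpow_le_rpow (Real.rpow_nonneg (norm_nonneg _) _) h1
            (by positivity : (0:ℝ) ≤ 1/ρ)
          rwa [← Real.rpow_mul (norm_nonneg _), mul_one_div, div_self hρ0.ne',
            Real.rpow_one] at h2
        · simp only [hgdef]
          rw [norm_mul, char_norm, one_mul]
          exact hM v
      have hvol : volume (Ico (t k) (t (k+1))) < ⊤ := by
        rw [Real.volume_Ico]; exact ENNReal.ofReal_lt_top
      have hmeas : AEStronglyMeasurable (fun v => hfun v - m (t k) * g v)
          (volume.restrict (Ico (t k) (t (k+1)))) :=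
        ((hhInt.sub (hgInt.const_mul _)).aestronglyMeasurable).restrict
      have := MeasureTheory.norm_setIntegral_le_of_norm_le_const hvol hb
      rwa [measureReal_def, Real.volume_Ico, htd k, ENNReal.toReal_ofReal hδpos.le] at this
    have hErr1 : ‖(∫ v in Ico (t 0) (t n), hfun v) - S‖
        ≤ ∑ k ∈ Finset.range n, osc k ^ (1/ρ) * M * δ := by
      have hdecomp : (∫ v in Ico (t 0) (t n), hfun v) - S
          = ∑ k ∈ Finset.range n,
              ((H (t (k+1)) - H (t k)) - m (t k) * (F (t (k+1)) - F (t k))) := by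
        rw [hpart, hSdef, ← Finset.sum_sub_distrib]
      rw [hdecomp]
      exact le_trans (norm_sum_le _ _) (Finset.sum_le_sum hterm)
    have hHold : ∑ k ∈ Finset.range n, osc k ^ (1/ρ) ≤ (n:ℝ) ^ (1 - 1/ρ) := by
      have hconj : ρ.HolderConjugate (ρ/(ρ-1)) := Real.HolderConjugate.conjExponent hρ1
      have h1 := Real.inner_le_Lp_mul_Lq_of_nonneg (Finset.range n) hconj
        (f := fun k => osc k ^ (1/ρ)) (g := fun _ => 1)
        (fun k _ => Real.rpow_nonneg (hosc0 k) _) (fun _ _ => zero_le_one)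
      simp only [mul_one, Real.one_rpow, Finset.sum_const, Finset.card_range,
        nsmul_eq_mul] at h1
      have e1 : ∀ k : ℕ, (osc k ^ (1/ρ)) ^ ρ = osc k := fun k => by
        rw [← Real.rpow_mul (hosc0 k), one_div, inv_mul_cancel₀ hρ0.ne', Real.rpow_one]
      simp only [e1] at h1
      have e2 : (1:ℝ)/(ρ/(ρ-1)) = 1 - 1/ρ := by field_simp
      have h2 : (∑ k ∈ Finset.range n, osc k) ^ ((1:ℝ)/ρ) ≤ 1 :=
        le_trans (Real.rpow_le_rpow (Finset.sum_nonneg fun k _ => hosc0 k) hoscsum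
          (by positivity)) (by rw [Real.one_rpow])
      calc ∑ k ∈ Finset.range n, osc k ^ (1/ρ)
          ≤ (∑ k ∈ Finset.range n, osc k) ^ (1/ρ) * (n:ℝ) ^ (1/(ρ/(ρ-1))) := h1
        _ ≤ 1 * (n:ℝ) ^ (1/(ρ/(ρ-1))) := by
            apply mul_le_mul_of_nonneg_right h2 (Real.rpow_nonneg (by positivity) _)
        _ = (n:ℝ) ^ (1 - 1/ρ) := by rw [one_mul, e2]
    have hnum : (n:ℝ) ^ (1 - 1/ρ) * (M * δ) ≤ ε := by
      have e : (n:ℝ)^(1-1/ρ) * (M * δ) = (2*R'*M) / (n:ℝ)^(1/ρ) := by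
        rw [hδdef, Real.rpow_sub hnpos, Real.rpow_one]
        field_simp
      rw [e]
      have hhalf : (n:ℝ)^((1:ℝ)/2) ≤ (n:ℝ)^(1/ρ) :=
        Real.rpow_le_rpow_of_exponent_le hn1R (by
          rw [div_le_div_iff₀ (by norm_num) hρ0]; linarith)
      have hhalfpos : (0:ℝ) < (n:ℝ)^((1:ℝ)/2) := Real.rpow_pos_of_pos hnpos _
      have h6 : 2*R'*M/ε ≤ (n:ℝ)^((1:ℝ)/2) := by
        have h7 := Real.rpow_le_rpow (sq_nonneg (2*R'*M/ε)) hnR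
          (by norm_num : (0:ℝ) ≤ 1/2)
        have e8 : ((2*R'*M/ε)^2 : ℝ) ^ ((1:ℝ)/2) = 2*R'*M/ε := by
          rw [show ((2*R'*M/ε)^2 : ℝ) = (2*R'*M/ε) ^ (2:ℝ) by
            rw [← Real.rpow_natCast (2*R'*M/ε) 2]; norm_num]
          rw [← Real.rpow_mul (by positivity)]
          norm_num
        rwa [e8] at h7
      have h9 : 2*R'*M ≤ ε * (n:ℝ)^((1:ℝ)/2) := by
        have := (div_le_iff₀ hε).mp h6
        linarith
      rw [div_le_iff₀ (lt_of_lt_of_le hhalfpos hhalf)]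
      calc 2*R'*M ≤ ε * (n:ℝ)^((1:ℝ)/2) := h9
        _ ≤ ε * (n:ℝ)^(1/ρ) := mul_le_mul_of_nonneg_left hhalf hε.le
    have hErr2 : ‖(∫ v in Ico (t 0) (t n), hfun v) - S‖ ≤ ε := by
      refine le_trans hErr1 (le_trans ?_ hnum)
      calc ∑ k ∈ Finset.range n, osc k ^ (1/ρ) * M * δ
          = (∑ k ∈ Finset.range n, osc k ^ (1/ρ)) * (M * δ) := by
            rw [Finset.sum_mul]
            exact Finset.sum_congr rfl fun k _ => by ring
        _ ≤ (n:ℝ) ^ (1 - 1/ρ) * (M * δ) := by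
            apply mul_le_mul_of_nonneg_right hHold (by positivity)
    calc ‖applyMultiplier m (⇑f) x‖
        = ‖S + ((∫ v in Ico (t 0) (t n), hfun v) - S)‖ := by rw [hAM]; congr 1; ring
      _ ≤ ‖S‖ + ‖(∫ v in Ico (t 0) (t n), hfun v) - S‖ := norm_add_le _ _
      _ ≤ W * K0 + ε := add_le_add hYoung hErr2
      _ = K0 * W + ε := by ring
  calc (‖applyMultiplier m (⇑f) x‖₊ : ℝ≥0∞)
      = ENNReal.ofReal ‖applyMultiplier m (⇑f) x‖ := by rw [ofReal_norm, enorm_eq_nnnorm]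
    _ ≤ ENNReal.ofReal (K0 * W) := ENNReal.ofReal_le_ofReal key
    _ = ENNReal.ofReal K0 * ENNReal.ofReal W := ENNReal.ofReal_mul hK0nonneg
    _ ≤ (↑(Real.toNNReal K0 + 1)) * maximalSquareFunction s (⇑f) x := by
        apply mul_le_mul'
        · rw [ENNReal.ofReal]
          exact_mod_cast le_self_add
        · rw [hWdef]
          exact ENNReal.ofReal_toReal_le
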